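/- Let k be a positive integer, U ⊆ ℝ^n open, f : U → ℝ a C^k function, and x0 ∈ U with f(x0) = 0. Suppose f has order α at x0 with 0 < α ≤ k. Then f admits an α-derivative at x0, the initial part of f at x0 exists, and in_{x0}(f)(x) = D^α_+f_{x0}(x − x0) for all x; equivalently, f(x) = D^α_+f_{x0}(x − x0) + o(‖x − x0‖^α) as x → x0. -/

import Mathlib

open Filter Set Metric Topology Asymptotics

noncomputable section

set_option synthInstance.maxHeartbeats 1000000

/-- `ℝ^n` with the Euclidean structure. -/
abbrev Eucl (n : ℕ) : Type := EuclideanSpace ℝ (Fin n)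

variable {V W : Type*} [NormedAddCommGroup V] [NormedSpace ℝ V]
  [NormedAddCommGroup W] [NormedSpace ℝ W]

/-- `F` admits the `α`-derivative `H` at `x`:  `H` is continuous and for every direction `v`,
`F (x + t v) - F x = t ^ α • H v + o(t ^ α)` as `t → 0⁺`. -/
def HasAlphaDerivAt (F : V → W) (x : V) (α : ℝ) (H : V → W) : Prop :=
  Continuous H ∧ ∀ v : V,
    Tendsto (fun t : ℝ => (t ^ α)⁻¹ • (F (x + t • v) - F x - t ^ α • H v))
      (𝓝[>] (0 : ℝ)) (𝓝 0)

/-- `F` has order `α` at `x`: for every nonzero direction `v` the limit of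
`F (x + t v) / t ^ α` as `t → 0⁺` exists, and for at least one `v` it is nonzero. -/
def HasOrderAt (F : V → W) (x : V) (α : ℝ) : Prop :=
  (∀ v : V, v ≠ 0 → ∃ L : W,
      Tendsto (fun t : ℝ => (t ^ α)⁻¹ • F (x + t • v)) (𝓝[>] (0 : ℝ)) (𝓝 L)) ∧
  ∃ v : V, v ≠ 0 ∧ ∃ L : W, L ≠ 0 ∧
      Tendsto (fun t : ℝ => (t ^ α)⁻¹ • F (x + t • v)) (𝓝[>] (0 : ℝ)) (𝓝 L)

/-- `φ` is a lipeomorphism from `U` onto `V'`. -/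
def IsLipeoOn (φ : V → W) (U : Set V) (V' : Set W) : Prop :=
  Set.BijOn φ U V' ∧ ∃ c : ℝ, 1 ≤ c ∧ ∀ x ∈ U, ∀ y ∈ U,
    (1 / c) * ‖x - y‖ ≤ ‖φ x - φ y‖ ∧ ‖φ x - φ y‖ ≤ c * ‖x - y‖

/-- `d` is a pseudo-Lipschitz derivative of `φ` at `x`: along some sequence `t_j → 0⁺`,
`(φ (x + t_j v) - φ x) / t_j → d v` uniformly on compact sets. -/
def IsPseudoLipDerivAt (φ : V → V) (x : V) (d : V → V) : Prop :=
  ∃ t : ℕ → ℝ, (∀ j, 0 < t j) ∧ Tendsto t atTop (𝓝 (0 : ℝ)) ∧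
    ∀ K : Set V, IsCompact K →
      TendstoUniformlyOn (fun j v => (t j)⁻¹ • (φ (x + t j • v) - φ x)) d atTop K

/-- `F ∼ G` at `x₀`: asymptotic equivalence of `F` and `G` at `x₀`. -/
def AsympEquivAt (F G : V → W) (x₀ : V) : Prop :=
  ∃ c₁ c₂ : ℝ, 0 < c₁ ∧ 0 < c₂ ∧
    ∀ᶠ x in 𝓝 x₀, c₂ * ‖F x‖ ≤ ‖G x‖ ∧ ‖G x‖ ≤ c₁ * ‖F x‖

/-- `F ≈ G` at `x₀` via the lipeomorphism `φ`. -/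
def AsympLipEquivAtVia {V' : Type*} [NormedAddCommGroup V'] [NormedSpace ℝ V']
    (F : V → W) (G : V' → W) (φ : V → V') (x₀ : V) : Prop :=
  ∃ c : ℝ, 1 ≤ c ∧ ∀ᶠ x in 𝓝 x₀,
    (1 / c) * ‖F x - F x₀‖ ≤ ‖G (φ x) - G (φ x₀)‖ ∧
      ‖G (φ x) - G (φ x₀)‖ ≤ c * ‖F x - F x₀‖

/-- The degree-`m` term of the Taylor series of `F` at `0`; for a `C^∞` germ of
finite order `m` this is its initial part `in(F)`. -/
def inPart (F : V → ℝ) (m : ℕ) : V → ℝ :=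
  fun x => (m.factorial : ℝ)⁻¹ • iteratedFDeriv ℝ m F 0 (fun _ => x)


section Helpers
variable {E : Type*} [NormedAddCommGroup E] [NormedSpace ℝ E]

-- H3: within Icc = global
lemma myIccDeriv {g : ℝ → ℝ} {O : Set ℝ} (hO : IsOpen O) {N : ℕ} (hg : ContDiffOn ℝ N g O)
    (hIcc : Icc (0:ℝ) 1 ⊆ O) {j : ℕ} (hj : j ≤ N) {t : ℝ} (ht : t ∈ Icc (0:ℝ) 1) :
    iteratedDerivWithin j g (Icc 0 1) t = iteratedDeriv j g t := by
  rw [iteratedDerivWithin_eq_iteratedFDerivWithin, iteratedDeriv_eq_iteratedFDeriv]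
  congr 1
  have hTS := (hg.ftaylorSeriesWithin hO.uniqueDiffOn).mono hIcc
  have h1 := (hTS.eq_iteratedFDerivWithin_of_uniqueDiffOn (by exact_mod_cast hj)
    (uniqueDiffOn_Icc one_pos) ht).symm
  rw [h1]
  exact iteratedFDerivWithin_of_isOpen j hO (hIcc ht)

-- diff at of iteratedFDeriv
lemma myDiffAt {f : E → ℝ} {U : Set E} (hU : IsOpen U) {j : ℕ} (hf : ContDiffOn ℝ (j+1 : ℕ) f U)
    {x : E} (hx : x ∈ U) : DifferentiableAt ℝ (iteratedFDeriv ℝ j f) x := by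
  have h1 : DifferentiableWithinAt ℝ (iteratedFDerivWithin ℝ j f U) U x :=
    hf.differentiableOn_iteratedFDerivWithin (by exact_mod_cast j.lt_succ_self)
      hU.uniqueDiffOn x hx
  have h2 : DifferentiableAt ℝ (iteratedFDerivWithin ℝ j f U) x :=
    h1.differentiableAt (hU.mem_nhds hx)
  exact h2.congr_of_eventuallyEq
    (((hU.eventually_mem hx).mono (fun y hy => (iteratedFDerivWithin_of_isOpen j hU hy).symm)))

-- continuity of iteratedFDeriv on open
lemma myContOn {f : E → ℝ} {U : Set E} (hU : IsOpen U) {m N : ℕ} (hmN : m ≤ N)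
    (hf : ContDiffOn ℝ N f U) :
    ContinuousOn (iteratedFDeriv ℝ m f) U :=
  (hf.continuousOn_iteratedFDerivWithin (by exact_mod_cast hmN) hU.uniqueDiffOn).congr
    (fun y hy => (iteratedFDerivWithin_of_isOpen m hU hy).symm)

-- L1: iterated deriv along line
lemma myLine (j : ℕ) : ∀ {f : E → ℝ} {U : Set E}, IsOpen U → ContDiffOn ℝ j f U →
    ∀ (x₀ v : E) (t : ℝ), x₀ + t • v ∈ U →
    iteratedDeriv j (fun s : ℝ => f (x₀ + s • v)) t
      = iteratedFDeriv ℝ j f (x₀ + t • v) (fun _ => v) := by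
  induction j with
  | zero => intro f U hU hf x₀ v t ht; simp [iteratedDeriv_zero, iteratedFDeriv_zero_apply]
  | succ j IH =>
    intro f U hU hf x₀ v t ht
    rw [iteratedDeriv_succ]
    have hev : (fun s : ℝ => iteratedDeriv j (fun s : ℝ => f (x₀ + s • v)) s)
        =ᶠ[𝓝 t] (fun s : ℝ => iteratedFDeriv ℝ j f (x₀ + s • v) (fun _ => v)) := by
      have hopen : IsOpen {s : ℝ | x₀ + s • v ∈ U} :=
        hU.preimage (by continuity)
      filter_upwards [hopen.eventually_mem ht] with s hs
      exact IH hU (hf.of_le (by exact_mod_cast j.le_succ)) x₀ v s hs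
    rw [hev.deriv_eq]
    have hline : HasDerivAt (fun s : ℝ => x₀ + s • v) v t := by
      simpa using ((hasDerivAt_id t).smul_const v).const_add x₀
    have hdiff : DifferentiableAt ℝ (iteratedFDeriv ℝ j f) (x₀ + t • v) :=
      myDiffAt hU hf ht
    have hcomp : HasDerivAt (fun s : ℝ => iteratedFDeriv ℝ j f (x₀ + s • v))
        (fderiv ℝ (iteratedFDeriv ℝ j f) (x₀ + t • v) v) t :=
      hdiff.hasFDerivAt.comp_hasDerivAt t hline
    have happ := (ContinuousMultilinearMap.apply ℝ (fun _ : Fin j => E) ℝ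
      (fun _ => v)).hasFDerivAt.comp_hasDerivAt t hcomp
    have happ' : HasDerivAt (fun s : ℝ => iteratedFDeriv ℝ j f (x₀ + s • v) (fun _ => v))
        (fderiv ℝ (iteratedFDeriv ℝ j f) (x₀ + t • v) v (fun _ => v)) t := happ
    rw [happ'.deriv, iteratedFDeriv_succ_apply_left]
    rfl

lemma diag_pow_norm (j : ℕ) (y : E) : ∏ _i : Fin j, ‖y‖ = ‖y‖ ^ j := by
  simp

lemma myTaylorLittleO (n : ℕ) {f : E → ℝ} {U : Set E} (hU : IsOpen U)
    (hf : ContDiffOn ℝ (n+1 : ℕ) f U) {x₀ : E} (hx₀ : x₀ ∈ U) :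
    (fun y : E => f (x₀ + y) - ∑ j ∈ Finset.range (n+2),
        ((j.factorial : ℝ)⁻¹) • iteratedFDeriv ℝ j f x₀ (fun _ => y))
      =o[𝓝 0] (fun y : E => ‖y‖ ^ (n+1)) := by
  rw [isLittleO_iff]
  intro ε hε
  -- choose radius
  obtain ⟨r, hr, hrU⟩ := Metric.isOpen_iff.1 hU x₀ hx₀
  set G := iteratedFDeriv ℝ (n+1) f with hG
  have hcont : ContinuousAt G x₀ :=
    (myContOn hU le_rfl hf).continuousAt (hU.mem_nhds hx₀)
  have hev : ∀ᶠ x in 𝓝 x₀, ‖G x - G x₀‖ < ε := by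
    have := hcont.tendsto (Metric.ball_mem_nhds (G x₀) hε)
    filter_upwards [this] with x hx
    simpa [dist_eq_norm] using hx
  obtain ⟨δ, hδ, hδball⟩ := Metric.eventually_nhds_iff.1 hev
  set δ' := min δ r with hδ'
  have hδ'pos : 0 < δ' := lt_min hδ hr
  rw [Metric.eventually_nhds_iff]
  refine ⟨δ', hδ'pos, fun {y} hy => ?_⟩
  rw [dist_zero_right] at hy
  have hball : ∀ s : ℝ, |s| ≤ 1 → x₀ + s • y ∈ ball x₀ r ∧ dist (x₀ + s • y) x₀ < δ := by
    intro s hs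
    have h1 : dist (x₀ + s • y) x₀ < δ' := by
      rw [dist_eq_norm, add_sub_cancel_left, norm_smul, Real.norm_eq_abs]
      calc |s| * ‖y‖ ≤ 1 * ‖y‖ := by
            apply mul_le_mul_of_nonneg_right hs (norm_nonneg y)
        _ = ‖y‖ := one_mul _
        _ < δ' := hy
    exact ⟨mem_ball.2 (h1.trans_le (min_le_right _ _)),
      h1.trans_le (min_le_left _ _)⟩
  rcases eq_or_ne y 0 with rfl | hy0
  · have hzero : ∀ j ∈ Finset.range (n+2),
        ((j.factorial : ℝ)⁻¹) • iteratedFDeriv ℝ j f x₀ (fun _ => (0:E))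
          = if j = 0 then f x₀ else 0 := by
      intro j _
      rcases Nat.eq_zero_or_pos j with rfl | hj
      · simp [iteratedFDeriv_zero_apply]
      · rw [if_neg hj.ne']
        rw [(iteratedFDeriv ℝ j f x₀).map_coord_zero (⟨0, hj⟩ : Fin j) rfl]
        simp
    rw [Finset.sum_congr rfl hzero]
    simp
  -- nonzero case
  set φ : ℝ → ℝ := fun s => f (x₀ + s • y) with hφdef
  set O : Set ℝ := {s : ℝ | x₀ + s • y ∈ ball x₀ r ∧ dist (x₀ + s • y) x₀ < δ} with hO
  have hOopen : IsOpen O := by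
    apply IsOpen.inter
    · exact (Metric.isOpen_ball).preimage (by continuity)
    · have : IsOpen {z : E | dist z x₀ < δ} := Metric.isOpen_ball
      exact this.preimage (by continuity)
  have hIccO : Icc (0:ℝ) 1 ⊆ O := by
    intro s hs
    exact hball s (abs_le.2 ⟨by linarith [hs.1], hs.2⟩)
  have hlineC : ContDiff ℝ (n+1 : ℕ) (fun s : ℝ => x₀ + s • y) :=
    contDiff_const.add (contDiff_id.smul contDiff_const)
  have hφ : ContDiffOn ℝ (n+1 : ℕ) φ O := by
    apply (hf.mono hrU).comp (hlineC.contDiffOn)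
    intro s hs
    exact hs.1
  -- Lagrange
  have hφn : ContDiffOn ℝ n φ (Icc 0 1) :=
    (hφ.of_le (by exact_mod_cast n.le_succ)).mono hIccO
  have hφ' : DifferentiableOn ℝ (iteratedDerivWithin n φ (Icc 0 1)) (Ioo 0 1) := by
    have := (hφ.mono hIccO).differentiableOn_iteratedDerivWithin
      (by exact_mod_cast n.lt_succ_self) (uniqueDiffOn_Icc one_pos)
    exact this.mono Ioo_subset_Icc_self
  obtain ⟨ξ, hξ, hlag⟩ := taylor_mean_remainder_lagrange (f := φ) (x₀ := 0) (x := 1) zero_ne_one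
    (by rw [uIcc_of_le zero_le_one]; exact hφn)
    (by rw [uIcc_of_le zero_le_one, uIoo_of_le zero_le_one]; exact hφ')
  rw [uIcc_of_le zero_le_one] at hlag
  rw [uIoo_of_le zero_le_one] at hξ
  have hsum : taylorWithinEval φ n (Icc 0 1) 0 1 = ∑ j ∈ Finset.range (n+1),
      ((j.factorial : ℝ)⁻¹) • iteratedFDeriv ℝ j f x₀ (fun _ => y) := by
    rw [taylor_within_apply]
    refine Finset.sum_congr rfl fun j hj => ?_
    rw [myIccDeriv hOopen hφ hIccO ((Nat.le_of_lt_succ (Finset.mem_range.1 hj)).trans n.le_succ)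
      (left_mem_Icc.2 zero_le_one)]
    rw [myLine j hU (hf.of_le
      (by exact_mod_cast (Nat.le_of_lt_succ (Finset.mem_range.1 hj)).trans n.le_succ)) x₀ y 0
      (by simpa using hx₀)]
    simp
  have hξIcc : ξ ∈ Icc (0:ℝ) 1 := Ioo_subset_Icc_self hξ
  have hξmem : x₀ + ξ • y ∈ U := hrU (hIccO hξIcc).1
  have hDξ : iteratedDerivWithin (n+1) φ (Icc 0 1) ξ = G (x₀ + ξ • y) (fun _ => y) := by
    rw [myIccDeriv hOopen hφ hIccO le_rfl hξIcc, myLine (n+1) hU hf x₀ y ξ hξmem]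
  have hφ1 : φ 1 = f (x₀ + y) := by rw [hφdef]; simp
  rw [hsum, hDξ, hφ1] at hlag
  -- now assemble
  have key : f (x₀ + y) - ∑ j ∈ Finset.range (n+2),
      ((j.factorial : ℝ)⁻¹) • iteratedFDeriv ℝ j f x₀ (fun _ => y)
      = (((n+1).factorial : ℝ))⁻¹ * (G (x₀ + ξ • y) (fun _ => y) - G x₀ (fun _ => y)) := by
    rw [Finset.sum_range_succ, ← sub_sub, hlag]
    have : ((n:ℝ)+1) * (n.factorial : ℝ) = ((n+1).factorial : ℝ) := by
      rw [Nat.factorial_succ]; push_cast; ring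
    field_simp
    simp only [hG, smul_eq_mul, sub_zero, one_pow, mul_one, one_div]
    rw [← mul_assoc, mul_inv_cancel₀ (by positivity), one_mul]
  rw [key]
  have hb1 : ‖G (x₀ + ξ • y) - G x₀‖ ≤ ε := by
    have := hδball (hball ξ (abs_le.2 ⟨by linarith [hξIcc.1], hξIcc.2⟩)).2
    exact this.le
  have hb2 : ‖(G (x₀ + ξ • y) - G x₀) (fun _ : Fin (n+1) => y)‖ ≤ ε * ‖y‖ ^ (n+1) := by
    calc ‖(G (x₀ + ξ • y) - G x₀) (fun _ : Fin (n+1) => y)‖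
        ≤ ‖G (x₀ + ξ • y) - G x₀‖ * ∏ _i : Fin (n+1), ‖y‖ :=
          ContinuousMultilinearMap.le_opNorm _ _
      _ = ‖G (x₀ + ξ • y) - G x₀‖ * ‖y‖ ^ (n+1) := by rw [diag_pow_norm]
      _ ≤ ε * ‖y‖ ^ (n+1) := by
          apply mul_le_mul_of_nonneg_right hb1 (by positivity)
  have hfac : (((n+1).factorial : ℝ))⁻¹ ≤ 1 := by
    rw [inv_le_one_iff₀]
    right
    exact_mod_cast (n+1).factorial_pos
  calc ‖(((n+1).factorial : ℝ))⁻¹ * (G (x₀ + ξ • y) (fun _ => y) - G x₀ (fun _ => y))‖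
      = (((n+1).factorial : ℝ))⁻¹ * ‖(G (x₀ + ξ • y) - G x₀) (fun _ : Fin (n+1) => y)‖ := by
        rw [norm_mul, Real.norm_eq_abs, abs_of_nonneg (by positivity : (0:ℝ) ≤ (((n+1).factorial : ℝ))⁻¹), ContinuousMultilinearMap.sub_apply]
    _ ≤ 1 * (ε * ‖y‖ ^ (n+1)) := by
        apply mul_le_mul hfac hb2 (norm_nonneg _) zero_le_one
    _ = ε * ‖‖y‖ ^ (n+1)‖ := by
        rw [one_mul]
        congr 1
        rw [Real.norm_eq_abs, abs_of_nonneg (by positivity)]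

-- D1
lemma poly_div_tendsto {k j₀ : ℕ} (a : ℕ → ℝ) (g Er : ℝ → ℝ)
    (hg : ∀ t : ℝ, 0 < t → g t = (∑ j ∈ Finset.range (k+1), t^j * a j) + Er t)
    (hE : Tendsto (fun t => Er t / t^k) (𝓝[>] (0:ℝ)) (𝓝 0))
    (hj₀k : j₀ ≤ k) (hlow : ∀ i < j₀, a i = 0) :
    Tendsto (fun t => g t / t^j₀) (𝓝[>] (0:ℝ)) (𝓝 (a j₀)) := by
  have h1 : ∀ t : ℝ, 0 < t → g t / t^j₀ =
      (∑ j ∈ Finset.range (k+1), t^(j - j₀) * a j) + (Er t / t^k) * t^(k - j₀) := by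
    intro t ht
    have htj : (t:ℝ)^j₀ ≠ 0 := pow_ne_zero _ ht.ne'
    rw [hg t ht, add_div]
    congr 1
    · rw [Finset.sum_div]
      refine Finset.sum_congr rfl fun j _ => ?_
      rcases lt_or_ge j j₀ with h | h
      · rw [hlow j h]; simp
      · have hpow : t^j = t^(j - j₀) * t^j₀ := by
          rw [← pow_add, Nat.sub_add_cancel h]
        rw [hpow]
        field_simp
    · have hpow : t^k = t^(k - j₀) * t^j₀ := by
        rw [← pow_add, Nat.sub_add_cancel hj₀k]
      rw [hpow]
      have htk : (t:ℝ)^(k - j₀) ≠ 0 := pow_ne_zero _ ht.ne'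
      field_simp
  have heq : (fun t => g t / t^j₀) =ᶠ[𝓝[>] (0:ℝ)]
      (fun t => (∑ j ∈ Finset.range (k+1), t^(j - j₀) * a j) + (Er t / t^k) * t^(k - j₀)) := by
    filter_upwards [self_mem_nhdsWithin] with t ht
    exact h1 t ht
  rw [tendsto_congr' heq]
  have hsum : Tendsto (fun t : ℝ => ∑ j ∈ Finset.range (k+1), t^(j - j₀) * a j)
      (𝓝[>] (0:ℝ)) (𝓝 (a j₀)) := by
    have hc : Continuous (fun t : ℝ => ∑ j ∈ Finset.range (k+1), t^(j - j₀) * a j) := by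
      continuity
    have := (hc.tendsto 0).mono_left (nhdsWithin_le_nhds (s := Set.Ioi (0:ℝ)))
    convert this using 2
    rw [Finset.sum_eq_single j₀]
    · simp
    · intro j hj hne
      rcases lt_or_ge j j₀ with h | h
      · rw [hlow j h, mul_zero]
      · rw [zero_pow, zero_mul]
        omega
    · intro h
      exact absurd (Finset.mem_range.2 (Nat.lt_succ_of_le hj₀k)) h
  have hrem : Tendsto (fun t : ℝ => (Er t / t^k) * t^(k - j₀)) (𝓝[>] (0:ℝ)) (𝓝 0) := by
    have h2 : Tendsto (fun t : ℝ => t^(k - j₀)) (𝓝[>] (0:ℝ)) (𝓝 ((0:ℝ)^(k - j₀))) :=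
      ((continuous_pow (k - j₀)).tendsto 0).mono_left nhdsWithin_le_nhds
    have := hE.mul h2
    rwa [zero_mul] at this
  simpa using hsum.add hrem

-- D2
lemma exponent_eq {g : ℝ → ℝ} {j₀ : ℕ} {α c L : ℝ}
    (hc : c ≠ 0) (h1 : Tendsto (fun t => g t / t^j₀) (𝓝[>] (0:ℝ)) (𝓝 c))
    (h2 : Tendsto (fun t => g t / t^α) (𝓝[>] (0:ℝ)) (𝓝 L)) :
    α ≤ (j₀:ℝ) ∧ (L ≠ 0 → (j₀:ℝ) = α) := by
  have hne : ∀ᶠ t in 𝓝[>] (0:ℝ), g t / t^j₀ ≠ 0 := h1.eventually_ne hc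
  have hq : Tendsto (fun t => (g t / t^α) / (g t / t^j₀)) (𝓝[>] (0:ℝ)) (𝓝 (L / c)) :=
    h2.div h1 hc
  have heq : (fun t => (g t / t^α) / (g t / t^j₀)) =ᶠ[𝓝[>] (0:ℝ)]
      (fun t => t ^ ((j₀:ℝ) - α)) := by
    filter_upwards [self_mem_nhdsWithin, hne] with t ht hgt
    have ht' : (0:ℝ) < t := ht
    have hgt' : g t ≠ 0 := fun h => hgt (by simp [h])
    have hα0 : t ^ α ≠ 0 := (Real.rpow_pos_of_pos ht' α).ne'
    have hj0 : (t:ℝ)^j₀ ≠ 0 := pow_ne_zero _ ht'.ne'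
    rw [Real.rpow_sub ht', Real.rpow_natCast]
    field_simp
  have hq' : Tendsto (fun t : ℝ => t ^ ((j₀:ℝ) - α)) (𝓝[>] (0:ℝ)) (𝓝 (L / c)) :=
    (tendsto_congr' heq).1 hq
  have hnotlt : ¬ ((j₀:ℝ) < α) := by
    intro hlt
    have htop : Tendsto (fun t : ℝ => t ^ ((j₀:ℝ) - α)) (𝓝[>] (0:ℝ)) atTop := by
      have h3 := (tendsto_rpow_atTop (show (0:ℝ) < α - (j₀:ℝ) by linarith)).comp
        tendsto_inv_nhdsGT_zero
      apply h3.congr'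
      filter_upwards [self_mem_nhdsWithin] with t ht
      have ht' : (0:ℝ) < t := ht
      show (t⁻¹) ^ (α - (j₀:ℝ)) = t ^ ((j₀:ℝ) - α)
      rw [Real.inv_rpow ht'.le, ← Real.rpow_neg ht'.le, neg_sub]
    exact not_tendsto_nhds_of_tendsto_atTop htop _ hq'
  refine ⟨not_lt.1 hnotlt, fun hL => ?_⟩
  rcases eq_or_lt_of_le (not_lt.1 hnotlt) with h | h
  · exact h.symm
  · exfalso
    have hβ : (0:ℝ) < (j₀:ℝ) - α := by linarith
    have htend0 : Tendsto (fun t : ℝ => t ^ ((j₀:ℝ) - α)) (𝓝[>] (0:ℝ)) (𝓝 0) := by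
      have := (Real.continuousAt_rpow_const 0 ((j₀:ℝ) - α) (Or.inr hβ.le)).tendsto
      rw [Real.zero_rpow hβ.ne'] at this
      exact this.mono_left nhdsWithin_le_nhds
    have : L / c = 0 := tendsto_nhds_unique hq' htend0
    rcases div_eq_zero_iff.1 this with h0 | h0
    · exact hL h0
    · exact hc h0

-- D0
lemma all_zero_tendsto {k : ℕ} {α : ℝ} (hαk : α ≤ (k:ℝ)) (g Er : ℝ → ℝ)
    (hg : ∀ t : ℝ, 0 < t → g t = Er t)
    (hE : Tendsto (fun t => Er t / t^k) (𝓝[>] (0:ℝ)) (𝓝 0)) :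
    Tendsto (fun t => g t / t^α) (𝓝[>] (0:ℝ)) (𝓝 0) := by
  have hIoo : Ioo (0:ℝ) 1 ∈ 𝓝[>] (0:ℝ) := Ioo_mem_nhdsGT_of_mem ⟨le_refl 0, one_pos⟩
  have hb : ∀ᶠ t in 𝓝[>] (0:ℝ), ‖g t / t^α‖ ≤ |Er t / t^k| := by
    filter_upwards [hIoo] with t ht
    have ht' : (0:ℝ) < t := ht.1
    have h1 : g t / t^α = (Er t / t^k) * t^((k:ℝ) - α) := by
      rw [hg t ht', div_mul_eq_mul_div]
      rw [div_eq_div_iff (Real.rpow_pos_of_pos ht' α).ne' (pow_ne_zero k ht'.ne')]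
      rw [mul_assoc, ← Real.rpow_add ht', ← Real.rpow_natCast t k]
      congr 2
      ring
    rw [h1, Real.norm_eq_abs, abs_mul,
      abs_of_nonneg (Real.rpow_nonneg ht'.le _)]
    calc |Er t / t^k| * t^((k:ℝ) - α) ≤ |Er t / t^k| * 1 := by
          apply mul_le_mul_of_nonneg_left _ (abs_nonneg _)
          exact Real.rpow_le_one ht'.le ht.2.le (by linarith)
      _ = |Er t / t^k| := mul_one _
  have h0 : Tendsto (fun t => |Er t / t^k|) (𝓝[>] (0:ℝ)) (𝓝 0) := by
    simpa using hE.abs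
  exact squeeze_zero_norm' hb h0

end Helpers

set_option maxHeartbeats 1000000 in
/-- a `C^k` function of order `α ≤ k` at `x₀` admits an `α`-derivative at `x₀`,
its initial part at `x₀` exists and `in_{x₀}(f)(x) = D^α_+ f_{x₀}(x - x₀)`, i.e.
`f x = D^α_+ f_{x₀} (x - x₀) + o(‖x - x₀‖ ^ α)` as `x → x₀`. -/
theorem initialPart_eq_alphaDeriv_of_contDiffOn {n : ℕ} (k : ℕ) (hk : 1 ≤ k)
    (U : Set (Eucl n)) (hU : IsOpen U)
    (f : Eucl n → ℝ) (hf : ContDiffOn ℝ (k : ℕ∞) f U)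
    (x₀ : Eucl n) (hx₀ : x₀ ∈ U) (hf0 : f x₀ = 0)
    (α : ℝ) (hα : 0 < α) (hαk : α ≤ (k : ℝ)) (hord : HasOrderAt f x₀ α) :
    ∃ H : Eucl n → ℝ, HasAlphaDerivAt f x₀ α H ∧
      (fun x => f x - H (x - x₀)) =o[𝓝 x₀] (fun x => ‖x - x₀‖ ^ α) ∧
      ¬ Tendsto (fun x => (‖x - x₀‖ ^ α)⁻¹ * H (x - x₀)) (𝓝[≠] x₀) (𝓝 (0 : ℝ)) := by
  obtain ⟨n₀, rfl⟩ : ∃ n₀, k = n₀ + 1 := ⟨k - 1, (Nat.succ_pred_eq_of_pos hk).symm⟩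
  set c : ℕ → Eucl n → ℝ :=
    fun j y => ((j.factorial : ℝ)⁻¹) • iteratedFDeriv ℝ j f x₀ (fun _ => y) with hcdef
  have hfk : ContDiffOn ℝ ((n₀+1 : ℕ) : ℕ∞) f U := by exact_mod_cast hf
  have hR : (fun y : Eucl n => f (x₀ + y) - ∑ j ∈ Finset.range (n₀+2), c j y)
      =o[𝓝 0] (fun y : Eucl n => ‖y‖ ^ (n₀+1)) := myTaylorLittleO n₀ hU hfk hx₀
  set R : Eucl n → ℝ := fun y => f (x₀ + y) - ∑ j ∈ Finset.range (n₀+2), c j y with hRdef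
  -- homogeneity
  have hhom : ∀ (j : ℕ) (t : ℝ) (v : Eucl n), c j (t • v) = t^j * c j v := by
    intro j t v
    have h1 : (fun _ : Fin j => t • v) = (fun i : Fin j => t • (fun _ : Fin j => v) i) := rfl
    simp only [hcdef, h1, ContinuousMultilinearMap.map_smul_univ]
    simp only [Finset.prod_const, Finset.card_univ, Fintype.card_fin, smul_eq_mul]
    ring
  have hgline : ∀ (v : Eucl n) (t : ℝ),
      f (x₀ + t • v) = (∑ j ∈ Finset.range (n₀+2), t^j * c j v) + R (t • v) := by
    intro v t
    have h1 : ∑ j ∈ Finset.range (n₀+2), c j (t • v)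
        = ∑ j ∈ Finset.range (n₀+2), t^j * c j v :=
      Finset.sum_congr rfl fun j _ => hhom j t v
    rw [hRdef]
    simp only [← h1]
    ring
  have hEline : ∀ v : Eucl n,
      Tendsto (fun t : ℝ => R (t • v) / t^(n₀+1)) (𝓝[>] (0:ℝ)) (𝓝 0) := by
    intro v
    have h1 : Tendsto (fun t : ℝ => t • v) (𝓝[>] (0:ℝ)) (𝓝 0) := by
      have h : Tendsto (fun t : ℝ => t • v) (𝓝 0) (𝓝 ((0:ℝ) • v)) :=
        ((continuous_id.smul (continuous_const (y := v)))).tendsto (0:ℝ)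
      simp only [id_eq, zero_smul] at h
      exact h.mono_left nhdsWithin_le_nhds
    have h2 := hR.comp_tendsto h1
    have h3 : (fun t : ℝ => ‖t • v‖^(n₀+1)) =O[𝓝[>] (0:ℝ)] (fun t => t^(n₀+1)) := by
      rw [isBigO_iff]
      refine ⟨‖v‖^(n₀+1), ?_⟩
      filter_upwards [self_mem_nhdsWithin] with t ht
      have ht' : (0:ℝ) < t := ht
      have e1 : ‖t • v‖ ^ (n₀+1) = |t|^(n₀+1) * ‖v‖^(n₀+1) := by
        rw [norm_smul, mul_pow, Real.norm_eq_abs]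
      rw [Real.norm_eq_abs (t ^ (n₀+1)), abs_pow, Real.norm_eq_abs,
        abs_of_nonneg (by positivity), e1]
      exact le_of_eq (by ring)
    exact ((h2.trans_isBigO h3).tendsto_div_nhds_zero)
  obtain ⟨hall, v₀, hv₀, L₀, hL₀, hlim₀⟩ := hord
  simp only [smul_eq_mul, inv_mul_eq_div] at hlim₀
  -- existence of nonzero coefficient for v₀
  have hex : ∃ j, c j v₀ ≠ 0 := by
    by_contra h
    push_neg at h
    have hzero := all_zero_tendsto (by exact_mod_cast hαk) (fun t => f (x₀ + t • v₀))
      (fun t => R (t • v₀)) (fun t ht => by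
        show f (x₀ + t • v₀) = R (t • v₀)
        rw [hgline v₀ t]
        rw [Finset.sum_eq_zero (fun j _ => by rw [h j, mul_zero])]
        ring) (hEline v₀)
    exact hL₀ (tendsto_nhds_unique hlim₀ hzero)
  set j₀ := Nat.find hex with hj₀def
  have hj₀ : c j₀ v₀ ≠ 0 := Nat.find_spec hex
  have hlow₀ : ∀ i < j₀, c i v₀ = 0 := fun i hi => not_not.1 (Nat.find_min hex hi)
  have hj₀le : j₀ ≤ n₀ + 1 := by
    by_contra hgt
    push_neg at hgt
    -- if j₀ > n₀+1 then all c j v₀ = 0 for j ≤ n₀+1, same contradiction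
    have h := all_zero_tendsto (by exact_mod_cast hαk) (fun t => f (x₀ + t • v₀))
      (fun t => R (t • v₀)) (fun t ht => by
        show f (x₀ + t • v₀) = R (t • v₀)
        rw [hgline v₀ t]
        rw [Finset.sum_eq_zero (fun j hj => by
          rw [hlow₀ j (lt_of_lt_of_le (Finset.mem_range.1 hj) hgt), mul_zero])]
        ring) (hEline v₀)
    exact hL₀ (tendsto_nhds_unique hlim₀ h)
  have hmin₀ := poly_div_tendsto (fun j => c j v₀) (fun t => f (x₀ + t • v₀))
    (fun t => R (t • v₀)) (fun t _ => hgline v₀ t) (hEline v₀) hj₀le hlow₀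
  have hexp := exponent_eq hj₀ hmin₀ hlim₀
  have hαeq : (j₀ : ℝ) = α := hexp.2 hL₀
  -- vanishing below j₀ for all v
  have hlowall : ∀ j < j₀, ∀ v : Eucl n, c j v = 0 := by
    intro j hj v
    rcases eq_or_ne v 0 with rfl | hv
    · rcases Nat.eq_zero_or_pos j with rfl | hjpos
      · simp [hcdef, iteratedFDeriv_zero_apply, hf0]
      · have hz : (iteratedFDeriv ℝ j f x₀) (fun _ : Fin j => (0 : Eucl n)) = 0 :=
          (iteratedFDeriv ℝ j f x₀).map_coord_zero (⟨0, hjpos⟩ : Fin j) rfl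
        simp only [hcdef]
        rw [hz, smul_zero]
    · by_contra hne
      have hexv : ∃ i, c i v ≠ 0 := ⟨j, hne⟩
      have hj₁ : c (Nat.find hexv) v ≠ 0 := Nat.find_spec hexv
      have hj₁le : Nat.find hexv ≤ j := Nat.find_min' hexv hne
      have hj₁k : Nat.find hexv ≤ n₀ + 1 := le_trans (hj₁le.trans hj.le) hj₀le
      have hlow₁ : ∀ i < Nat.find hexv, c i v = 0 :=
        fun i hi => not_not.1 (Nat.find_min hexv hi)
      have hmin₁ := poly_div_tendsto (fun i => c i v) (fun t => f (x₀ + t • v))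
        (fun t => R (t • v)) (fun t _ => hgline v t) (hEline v) hj₁k hlow₁
      obtain ⟨Lv, hLv⟩ := hall v hv
      simp only [smul_eq_mul, inv_mul_eq_div] at hLv
      have hle := (exponent_eq hj₁ hmin₁ hLv).1
      have hlt : ((Nat.find hexv : ℕ) : ℝ) < α := by
        rw [← hαeq]
        exact_mod_cast lt_of_le_of_lt hj₁le hj
      linarith
  -- the multivariate little-o for H := c j₀
  have hHcont : Continuous (c j₀) := by
    have h1 : Continuous (fun y : Eucl n => iteratedFDeriv ℝ j₀ f x₀ (fun _ => y)) :=
      (iteratedFDeriv ℝ j₀ f x₀).coe_continuous.comp (continuous_pi fun _ => continuous_id)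
    exact h1.const_smul ((j₀.factorial : ℝ)⁻¹)
  have hsplit : ∀ y : Eucl n, f (x₀ + y) - c j₀ y
      = R y + ∑ j ∈ (Finset.range (n₀+2)).filter (fun j => j₀ < j), c j y := by
    intro y
    have h1 : ∑ j ∈ Finset.range (n₀+2), c j y
        = (∑ j ∈ (Finset.range (n₀+2)).filter (fun j => j < j₀), c j y)
          + ∑ j ∈ (Finset.range (n₀+2)).filter (fun j => ¬ j < j₀), c j y :=
      (Finset.sum_filter_add_sum_filter_not _ _ _).symm
    have h2 : ∑ j ∈ (Finset.range (n₀+2)).filter (fun j => j < j₀), c j y = 0 :=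
      Finset.sum_eq_zero fun j hj => hlowall j (Finset.mem_filter.1 hj).2 y
    have h3 : (Finset.range (n₀+2)).filter (fun j => ¬ j < j₀)
        = insert j₀ ((Finset.range (n₀+2)).filter (fun j => j₀ < j)) := by
      ext j
      simp only [Finset.mem_filter, Finset.mem_insert, Finset.mem_range, not_lt]
      constructor
      · rintro ⟨hj1, hj2⟩
        rcases eq_or_lt_of_le hj2 with h | h
        · exact Or.inl h.symm
        · exact Or.inr ⟨hj1, h⟩
      · rintro (rfl | ⟨hj1, hj2⟩)
        · exact ⟨by omega, le_refl _⟩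
        · exact ⟨hj1, hj2.le⟩
    have h4 : ∑ j ∈ (Finset.range (n₀+2)).filter (fun j => ¬ j < j₀), c j y
        = c j₀ y + ∑ j ∈ (Finset.range (n₀+2)).filter (fun j => j₀ < j), c j y := by
      rw [h3, Finset.sum_insert (by simp)]
    have : R y = f (x₀ + y) - ∑ j ∈ Finset.range (n₀+2), c j y := rfl
    rw [this, h1, h2, h4]
    ring
  have hRo : R =o[𝓝 (0 : Eucl n)] (fun y => ‖y‖ ^ j₀) := by
    apply hR.trans_isBigO
    rw [isBigO_iff]
    refine ⟨1, ?_⟩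
    filter_upwards [Metric.ball_mem_nhds (0 : Eucl n) one_pos] with y hy
    rw [mem_ball, dist_zero_right] at hy
    rw [Real.norm_eq_abs, abs_of_nonneg (by positivity), Real.norm_eq_abs,
      abs_of_nonneg (by positivity), one_mul]
    exact pow_le_pow_of_le_one (norm_nonneg _) hy.le hj₀le
  have hterm : ∀ j ∈ (Finset.range (n₀+2)).filter (fun j => j₀ < j),
      (fun y : Eucl n => c j y) =o[𝓝 (0 : Eucl n)] (fun y => ‖y‖ ^ j₀) := by
    intro j hj
    have hjgt : j₀ < j := (Finset.mem_filter.1 hj).2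
    have h1 : (fun y : Eucl n => c j y) =O[𝓝 (0 : Eucl n)] fun y => ‖y‖ ^ j := by
      rw [isBigO_iff]
      refine ⟨(j.factorial : ℝ)⁻¹ * ‖iteratedFDeriv ℝ j f x₀‖, Eventually.of_forall fun y => ?_⟩
      have hb : ‖iteratedFDeriv ℝ j f x₀ (fun _ : Fin j => y)‖
          ≤ ‖iteratedFDeriv ℝ j f x₀‖ * ‖y‖ ^ j := by
        have := (iteratedFDeriv ℝ j f x₀).le_opNorm (fun _ : Fin j => y)
        simpa using this
      simp only [hcdef]
      rw [norm_smul, Real.norm_eq_abs ((j.factorial:ℝ)⁻¹),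
        abs_of_nonneg (by positivity : (0:ℝ) ≤ ((j.factorial:ℝ))⁻¹),
        Real.norm_eq_abs (‖y‖ ^ j), abs_of_nonneg (by positivity : (0:ℝ) ≤ ‖y‖ ^ j),
        mul_assoc]
      exact mul_le_mul_of_nonneg_left hb (by positivity)
    have h2 : (fun y : Eucl n => ‖y‖ ^ j) =o[𝓝 (0 : Eucl n)] fun y => ‖y‖ ^ j₀ := by
      have h3 : (fun y : Eucl n => ‖y‖ ^ (j - j₀)) =o[𝓝 (0 : Eucl n)] (fun _ => (1:ℝ)) := by
        rw [isLittleO_one_iff]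
        have h : Tendsto (fun y : Eucl n => ‖y‖ ^ (j - j₀)) (𝓝 0) (𝓝 (‖(0 : Eucl n)‖ ^ (j - j₀))) :=
          (continuous_norm.pow (j - j₀)).tendsto (0 : Eucl n)
        simpa [zero_pow (show j - j₀ ≠ 0 by omega)] using h
      have h4 := (isBigO_refl (fun y : Eucl n => ‖y‖ ^ j₀) (𝓝 (0 : Eucl n))).mul_isLittleO h3
      simp only [mul_one] at h4
      have he : (fun y : Eucl n => ‖y‖ ^ j) = fun y => ‖y‖ ^ j₀ * ‖y‖ ^ (j - j₀) :=
        funext fun y => by rw [← pow_add]; congr 1; omega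
      rw [he]
      exact h4
    exact h1.trans_isLittleO h2
  have hsumo : (fun y : Eucl n =>
      ∑ j ∈ (Finset.range (n₀+2)).filter (fun j => j₀ < j), c j y)
      =o[𝓝 (0 : Eucl n)] (fun y => ‖y‖ ^ j₀) := by
    have := IsLittleO.sum hterm
    rwa [Finset.sum_fn] at this
  have hlo : (fun y : Eucl n => f (x₀ + y) - c j₀ y) =o[𝓝 (0 : Eucl n)]
      (fun y => ‖y‖ ^ j₀) := by
    have h := hRo.add hsumo
    have he : (fun y : Eucl n => R y +
        ∑ j ∈ (Finset.range (n₀+2)).filter (fun j => j₀ < j), c j y)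
        = fun y => f (x₀ + y) - c j₀ y := funext fun y => (hsplit y).symm
    rwa [he] at h
  refine ⟨c j₀, ⟨hHcont, ?_⟩, ?_, ?_⟩
  · intro v
    have h1 : Tendsto (fun t : ℝ => t • v) (𝓝[>] (0:ℝ)) (𝓝 0) := by
      have h : Tendsto (fun t : ℝ => t • v) (𝓝 0) (𝓝 ((0:ℝ) • v)) :=
        ((continuous_id.smul (continuous_const (y := v)))).tendsto (0:ℝ)
      simp only [id_eq, zero_smul] at h
      exact h.mono_left nhdsWithin_le_nhds
    have h2 := hlo.comp_tendsto h1
    have h3 : (fun t : ℝ => ‖t • v‖ ^ j₀) =O[𝓝[>] (0:ℝ)] (fun t => t ^ j₀) := by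
      rw [isBigO_iff]
      refine ⟨‖v‖ ^ j₀, ?_⟩
      filter_upwards [self_mem_nhdsWithin] with t ht
      have ht' : (0:ℝ) < t := ht
      have e1 : ‖t • v‖ ^ j₀ = |t| ^ j₀ * ‖v‖ ^ j₀ := by
        rw [norm_smul, mul_pow, Real.norm_eq_abs]
      rw [Real.norm_eq_abs (t ^ j₀), abs_pow, Real.norm_eq_abs,
        abs_of_nonneg (by positivity), e1]
      exact le_of_eq (by ring)
    have h4 := (h2.trans_isBigO h3).tendsto_div_nhds_zero
    apply Tendsto.congr' _ h4
    filter_upwards [self_mem_nhdsWithin] with t ht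
    have ht' : (0:ℝ) < t := ht
    show (f (x₀ + t • v) - c j₀ (t • v)) / t ^ j₀
        = (t ^ α)⁻¹ • (f (x₀ + t • v) - f x₀ - t ^ α • c j₀ v)
    rw [hf0, sub_zero, smul_eq_mul, smul_eq_mul, ← hαeq, Real.rpow_natCast, hhom,
      div_eq_mul_inv]
    ring
  · have hcomp : Tendsto (fun x : Eucl n => x - x₀) (𝓝 x₀) (𝓝 0) := by
      have h : Tendsto (fun x : Eucl n => x - x₀) (𝓝 x₀) (𝓝 (x₀ - x₀)) :=
        (continuous_id.sub (continuous_const (y := x₀))).tendsto x₀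
      simpa using h
    have h2 := hlo.comp_tendsto hcomp
    have he1 : ((fun y : Eucl n => f (x₀ + y) - c j₀ y) ∘ fun x => x - x₀)
        = fun x : Eucl n => f x - c j₀ (x - x₀) := funext fun x => by
      simp [Function.comp]
    have he2 : ((fun y : Eucl n => ‖y‖ ^ j₀) ∘ fun x => x - x₀)
        = fun x : Eucl n => ‖x - x₀‖ ^ α := funext fun x => by
      show ‖x - x₀‖ ^ j₀ = ‖x - x₀‖ ^ α
      rw [← hαeq, Real.rpow_natCast]
    rw [he1, he2] at h2
    exact h2
  · intro hcontra
    have hγ : Tendsto (fun t : ℝ => x₀ + t • v₀) (𝓝[>] (0:ℝ)) (𝓝[≠] x₀) := by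
      rw [tendsto_nhdsWithin_iff]
      constructor
      · have hcc : Continuous (fun t : ℝ => x₀ + t • v₀) :=
          continuous_const.add (continuous_id.smul continuous_const)
        have h := hcc.tendsto (0:ℝ)
        simp only [zero_smul, add_zero] at h
        exact h.mono_left nhdsWithin_le_nhds
      · filter_upwards [self_mem_nhdsWithin] with t ht
        have ht' : (0:ℝ) < t := ht
        simp only [mem_compl_iff, mem_singleton_iff]
        intro h
        have h0 : t • v₀ = 0 := by
          have := congrArg (fun z => z - x₀) h
          simpa using this
        rcases smul_eq_zero.1 h0 with h | h
        · exact ht'.ne' h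
        · exact hv₀ h
    have h5 := hcontra.comp hγ
    have h6 : ((fun x : Eucl n => (‖x - x₀‖ ^ α)⁻¹ * c j₀ (x - x₀)) ∘
        fun t : ℝ => x₀ + t • v₀) =ᶠ[𝓝[>] (0:ℝ)]
        (fun _ : ℝ => (‖v₀‖ ^ j₀)⁻¹ * c j₀ v₀) := by
      filter_upwards [self_mem_nhdsWithin] with t ht
      have ht' : (0:ℝ) < t := ht
      show (‖(x₀ + t • v₀) - x₀‖ ^ α)⁻¹ * c j₀ ((x₀ + t • v₀) - x₀)
          = (‖v₀‖ ^ j₀)⁻¹ * c j₀ v₀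
      rw [add_sub_cancel_left, hhom, norm_smul, Real.norm_eq_abs, abs_of_pos ht',
        ← hαeq, Real.rpow_natCast, mul_pow, mul_inv]
      have htne : (t : ℝ) ^ j₀ ≠ 0 := pow_ne_zero _ ht'.ne'
      have key2 : ∀ a b x : ℝ, a ≠ 0 → (a⁻¹ * b) * (a * x) = b * x := by
        intro a b x ha
        field_simp
      exact key2 _ _ _ htne
    have h7 := (tendsto_congr' h6).1 h5
    have h8 : (‖v₀‖ ^ j₀)⁻¹ * c j₀ v₀ = 0 := tendsto_nhds_unique tendsto_const_nhds h7
    have hvn : ‖v₀‖ ≠ 0 := norm_ne_zero_iff.2 hv₀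
    rcases mul_eq_zero.1 h8 with h | h
    · exact (inv_ne_zero (pow_ne_zero _ hvn)) h
    · exact hj₀ h
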